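/- Fix n ≥ 2 and let a, b, c, d ∈ ℂ with ad − bc = 1. There exists k ∈ ℂ with k ≠ 0 such that the polynomial identity (a k^n + b z^n)(a z^n + b) = k (c z^n + d)(c k^n + d z^n) holds for all z ∈ ℂ — this identity expresses that the map f(z) = (a z^n + b)/(c z^n + d) commutes with the Möbius involution ι(z) = k/z, i.e. f(k/z) = k/f(z) — if and only if a^{n+1} b^{n−1} = c^{n−1} d^{n+1}, that is Y₁ = Y₂. (Corollary 1.4: the symmetry locus of bicritical maps commuting with a nontrivial Möbius automorphism is the variety Y² = 4 X^{n−1}(X+1)^{n+1}.) -/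

import Mathlib

/-- Corollary 1.4: a normalized bicritical map `f(z) = (a z^n + b)/(c z^n + d)`
with `ad - bc = 1` commutes with some Möbius involution `ι(z) = k/z`
(expressed by the polynomial identity
`(a k^n + b z^n)(a z^n + b) = k (c z^n + d)(c k^n + d z^n)`, i.e.
`f(k/z) = k/f(z)`) if and only if `Y₁ = Y₂`, that is
`a^{n+1} b^{n-1} = c^{n-1} d^{n+1}`. -/
theorem stmt4 (n : ℕ) (hn : 2 ≤ n) (a b c d : ℂ) (h : a * d - b * c = 1) :
    (∃ k : ℂ, k ≠ 0 ∧ ∀ z : ℂ,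
        (a * k ^ n + b * z ^ n) * (a * z ^ n + b) =
          k * (c * z ^ n + d) * (c * k ^ n + d * z ^ n)) ↔
    a ^ (n + 1) * b ^ (n - 1) = c ^ (n - 1) * d ^ (n + 1) := by
  obtain ⟨m, rfl⟩ : ∃ m, n = m + 2 := ⟨n - 2, by omega⟩
  simp only [show m + 2 - 1 = m + 1 from rfl, show m + 2 + 1 = m + 3 from rfl]
  constructor
  · rintro ⟨k, hk, hid⟩
    have hk1 : a * b = k * (c * d) := by
      have h0 := hid 0
      have hz : (0:ℂ) ^ (m + 2) = 0 := by simp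
      rw [hz] at h0
      apply mul_right_cancel₀ (pow_ne_zero (m + 2) hk)
      linear_combination h0
    have h1 := hid 1
    simp only [one_pow, mul_one] at h1
    by_cases hb : b = 0
    · subst hb
      have hcd : c * d = 0 := by
        rcases mul_eq_zero.mp (show k * (c * d) = 0 by linear_combination -hk1) with h' | h'
        · exact absurd h' hk
        · exact h'
      rcases mul_eq_zero.mp hcd with h' | h'
      · subst h'; simp [zero_pow]
      · subst h'; simp at h
    by_cases ha : a = 0
    · subst ha
      have hcd : c * d = 0 := by
        rcases mul_eq_zero.mp (show k * (c * d) = 0 by linear_combination -hk1) with h' | h'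
        · exact absurd h' hk
        · exact h'
      rcases mul_eq_zero.mp hcd with h' | h'
      · subst h'; simp at h
      · subst h'; simp [zero_pow]
    · have hcd : c * d ≠ 0 := by
        intro h'
        exact mul_ne_zero ha hb (by rw [hk1, h', mul_zero])
      have hc : c ≠ 0 := fun h' => hcd (by simp [h'])
      have hd : d ≠ 0 := fun h' => hcd (by simp [h'])
      have hk2 : k ^ (m + 2) * (a * c) = b * d := by
        apply mul_left_cancel₀ hcd
        linear_combination (c*d)^2 * h1 - (c*d)^2*(k^(m+2)+1) * hk1
          - (c*d*(c^2*k^(m+2) + d^2)) * hk1 - (c*d*(k^(m+2)*(a*c) - b*d)) * h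
      have hp : (a * b) ^ (m + 2) = k ^ (m + 2) * (c * d) ^ (m + 2) := by
        rw [hk1, mul_pow]
      apply mul_left_cancel₀ (mul_ne_zero hb hc)
      linear_combination (a*c) * hp + (c*d)^(m+2) * hk2
  · intro hY
    by_cases hb : b = 0
    · subst hb
      have hcd : c ^ (m + 1) * d ^ (m + 3) = 0 := by
        rw [← hY]; simp [zero_pow]
      have hc : c = 0 := by
        rcases mul_eq_zero.mp hcd with h' | h'
        · exact pow_eq_zero_iff (by omega) |>.mp h'
        · exfalso
          have : d = 0 := pow_eq_zero_iff (by omega) |>.mp h'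
          rw [this] at h; simp at h
      subst hc
      have had : a * d = 1 := by linear_combination h
      have ha : a ≠ 0 := fun h' => by simp [h'] at had
      have hd : d ≠ 0 := fun h' => by simp [h'] at had
      obtain ⟨w, hw⟩ := IsAlgClosed.exists_pow_nat_eq (k := ℂ) (d ^ 2 / a ^ 2) (n := m + 1) (by omega)
      have hw0 : w ≠ 0 := by
        intro h'
        rw [h'] at hw
        simp [zero_pow] at hw
        exact div_ne_zero (pow_ne_zero 2 hd) (pow_ne_zero 2 ha) hw.symm
      refine ⟨w, hw0, fun z => ?_⟩
      have key : a ^ 2 * w ^ (m + 2) = w * d ^ 2 := by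
        have : w ^ (m + 2) = w ^ (m + 1) * w := by ring
        rw [this, hw]
        field_simp
      linear_combination z ^ (m + 2) * key
    by_cases ha : a = 0
    · subst ha
      have hcd : c ^ (m + 1) * d ^ (m + 3) = 0 := by rw [← hY]; simp [zero_pow]
      have hc : c ≠ 0 := by
        intro h'; rw [h'] at h; simp at h
      have hd : d = 0 := by
        rcases mul_eq_zero.mp hcd with h' | h'
        · exact absurd (pow_eq_zero_iff (by omega) |>.mp h') hc
        · exact pow_eq_zero_iff (by omega) |>.mp h'
      subst hd
      have hbc : b * c = -1 := by linear_combination -h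
      have hb' : b ≠ 0 := hb
      obtain ⟨w, hw⟩ := IsAlgClosed.exists_pow_nat_eq (k := ℂ) (b ^ 2 / c ^ 2) (n := m + 3) (by omega)
      have hw0 : w ≠ 0 := by
        intro h'
        rw [h'] at hw
        simp [zero_pow] at hw
        exact div_ne_zero (pow_ne_zero 2 hb') (pow_ne_zero 2 hc) hw.symm
      refine ⟨w, hw0, fun z => ?_⟩
      have key : c ^ 2 * w ^ (m + 3) = b ^ 2 := by
        rw [hw]; field_simp
      linear_combination (-(z ^ (m + 2))) * key
    · have hcd0 : c ^ (m + 1) * d ^ (m + 3) ≠ 0 := by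
        rw [← hY]
        exact mul_ne_zero (pow_ne_zero _ ha) (pow_ne_zero _ hb)
      have hc : c ≠ 0 := fun h' => hcd0 (by simp [h', zero_pow])
      have hd : d ≠ 0 := fun h' => hcd0 (by simp [h', zero_pow])
      have hcd : c * d ≠ 0 := mul_ne_zero hc hd
      refine ⟨a * b / (c * d), div_ne_zero (mul_ne_zero ha hb) hcd, fun z => ?_⟩
      set k := a * b / (c * d) with hkdef
      have hk1 : a * b = k * (c * d) := by
        rw [hkdef]; field_simp
      have hk2 : k ^ (m + 2) * (a * c) = b * d := by
        have hp : (a * b) ^ (m + 2) = k ^ (m + 2) * (c * d) ^ (m + 2) := by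
          rw [hk1, mul_pow]
        apply mul_left_cancel₀ (pow_ne_zero (m + 2) hcd)
        linear_combination (b*c) * hY - (a*c) * hp
      have hM : a ^ 2 * k ^ (m + 2) + b ^ 2 = k * (c ^ 2 * k ^ (m + 2)) + k * d ^ 2 := by
        apply mul_left_cancel₀ hcd
        linear_combination (a*d - b*c) * hk2 + (c^2*k^(m+2) + d^2) * hk1
      linear_combination ((z^(m+2))^2 + k^(m+2)) * hk1 + z^(m+2) * hM
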